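/- Let A be a d×d rational matrix whose characteristic polynomial equals (the image in ℚ[x] of) the n-th cyclotomic polynomial for some n ≥ 1. Then S(A) ≠ {0} and S(A) is cyclic, i.e., there exists m ∈ ℕ, m ≥ 1, such that S(A) = {m·k : k ∈ ℕ}. -/

import Mathlib

/-- The exponent semigroup of a square rational matrix: the set of natural
numbers `n` such that every entry of `A ^ n` is an integer. -/
def expSemigroup {ι : Type*} [Fintype ι] [DecidableEq ι]
    (A : Matrix ι ι ℚ) : Set ℕ :=
  {n | ∀ i j, ∃ z : ℤ, (A ^ n) i j = (z : ℚ)}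

/-- A power is in the exponent semigroup iff it is the cast of an integer matrix. -/
lemma expSemigroup_iff {d : ℕ} (A : Matrix (Fin d) (Fin d) ℚ) (k : ℕ) :
    k ∈ expSemigroup A ↔ ∃ B : Matrix (Fin d) (Fin d) ℤ,
      B.map (Int.castRingHom ℚ) = A ^ k := by
  constructor
  · intro h
    refine ⟨Matrix.of fun i j => (h i j).choose, ?_⟩
    ext i j
    exact ((h i j).choose_spec).symm
  · rintro ⟨B, hB⟩ i j
    exact ⟨B i j, by rw [← hB]; rfl⟩

lemma expSemigroup_zero_mem {d : ℕ} (A : Matrix (Fin d) (Fin d) ℚ) :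
    0 ∈ expSemigroup A := by
  rw [expSemigroup_iff]
  exact ⟨1, by rw [pow_zero]; exact Matrix.map_one _ (map_zero _) (map_one _)⟩

lemma expSemigroup_add_mem {d : ℕ} (A : Matrix (Fin d) (Fin d) ℚ) {a b : ℕ}
    (ha : a ∈ expSemigroup A) (hb : b ∈ expSemigroup A) :
    a + b ∈ expSemigroup A := by
  rw [expSemigroup_iff] at ha hb ⊢
  obtain ⟨B, hB⟩ := ha
  obtain ⟨C, hC⟩ := hb
  exact ⟨B * C, by rw [Matrix.map_mul, hB, hC, pow_add]⟩

theorem stmt_14 {d : ℕ} (A : Matrix (Fin d) (Fin d) ℚ) (n : ℕ) (hn : 1 ≤ n)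
    (hA : A.charpoly = (Polynomial.cyclotomic n ℤ).map (Int.castRingHom ℚ)) :
    expSemigroup A ≠ {0} ∧
    ∃ m : ℕ, 1 ≤ m ∧ expSemigroup A = {n' : ℕ | ∃ k : ℕ, n' = m * k} := by
  classical
  -- Step 1 : A ^ n = 1
  have hone : A ^ n = 1 := by
    have hC : A.charpoly = Polynomial.cyclotomic n ℚ := by
      rw [hA, Polynomial.map_cyclotomic_int]
    obtain ⟨q, hq⟩ : Polynomial.cyclotomic n ℚ ∣ (Polynomial.X ^ n - 1) :=
      Polynomial.cyclotomic.dvd_X_pow_sub_one n ℚ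
    have h0 : Polynomial.aeval A (Polynomial.X ^ n - 1 : Polynomial ℚ) = 0 := by
      rw [hq, map_mul, ← hC, Matrix.aeval_self_charpoly, zero_mul]
    have h1 : A ^ n - 1 = 0 := by simpa using h0
    exact sub_eq_zero.mp h1
  -- n ∈ S(A)
  have hnS : n ∈ expSemigroup A := by
    rw [expSemigroup_iff]
    exact ⟨1, by rw [hone]; exact Matrix.map_one _ (map_zero _) (map_one _)⟩
  -- Step 2 : closure under truncated subtraction
  have hsub : ∀ a b : ℕ, a ∈ expSemigroup A → b ∈ expSemigroup A → a ≤ b →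
      b - a ∈ expSemigroup A := by
    intro a b ha hb hab
    rw [expSemigroup_iff] at ha hb ⊢
    obtain ⟨B, hB⟩ := ha
    obtain ⟨C, hC⟩ := hb
    -- det B is a unit
    have hdetpow : ((B.det : ℚ)) ^ n = 1 := by
      have h1 : (B.map (Int.castRingHom ℚ)).det = (B.det : ℚ) := by
        have := RingHom.map_det (Int.castRingHom ℚ) B
        rw [RingHom.mapMatrix_apply] at this
        exact this.symm
      have h2 : (A ^ a).det ^ n = 1 := by
        rw [← Matrix.det_pow, ← pow_mul, mul_comm, pow_mul, hone, one_pow, Matrix.det_one]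
      rw [← h1, hB]
      exact h2
    have hdetZ : B.det ^ n = 1 := by
      have : ((B.det ^ n : ℤ) : ℚ) = ((1 : ℤ) : ℚ) := by rw [Int.cast_pow, Int.cast_one]; exact hdetpow
      exact_mod_cast this
    have hu : IsUnit B.det := by
      refine IsUnit.of_mul_eq_one (B.det ^ (n - 1)) ?_
      rw [← pow_succ', Nat.sub_add_cancel hn, hdetZ]
    have : Invertible B := B.invertibleOfIsUnitDet hu
    refine ⟨C * ⅟B, ?_⟩
    have hBinv : (⅟B).map (Int.castRingHom ℚ) * (A ^ a) = 1 := by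
      rw [← hB, ← Matrix.map_mul, invOf_mul_self]
      exact Matrix.map_one _ (map_zero _) (map_one _)
    have key : A ^ (b - a) * (A ^ a * ((⅟B).map (Int.castRingHom ℚ)))
        = A ^ b * ((⅟B).map (Int.castRingHom ℚ)) := by
      rw [← mul_assoc, ← pow_add, Nat.sub_add_cancel hab]
    have hBinv' : A ^ a * ((⅟B).map (Int.castRingHom ℚ)) = 1 := by
      rw [← hB, ← Matrix.map_mul, mul_invOf_self]
      exact Matrix.map_one _ (map_zero _) (map_one _)
    rw [hBinv', mul_one] at key
    rw [Matrix.map_mul, hC, key]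
  -- Step 3 : the minimal positive element generates
  have hex : ∃ k, 0 < k ∧ k ∈ expSemigroup A := ⟨n, hn, hnS⟩
  set m := Nat.find hex with hm
  obtain ⟨hm0, hmS⟩ : 0 < m ∧ m ∈ expSemigroup A := Nat.find_spec hex
  have hmul : ∀ k : ℕ, m * k ∈ expSemigroup A := by
    intro k
    induction k with
    | zero => simpa using expSemigroup_zero_mem A
    | succ k ih =>
        have := expSemigroup_add_mem A ih hmS
        simpa [Nat.mul_succ] using this
  constructor
  · intro h
    have : n ∈ ({0} : Set ℕ) := h ▸ hnS
    simp at this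
    omega
  · refine ⟨m, hm0, ?_⟩
    ext s
    simp only [Set.mem_setOf_eq]
    constructor
    · intro hs
      have hmd := Nat.mod_add_div s m
      set t := m * (s / m) with ht
      set r := s % m with hrdef
      have hdiv : t ≤ s := by omega
      have hrS : s - t ∈ expSemigroup A := hsub _ _ (hmul _) hs hdiv
      have hrlt : r < m := Nat.mod_lt s hm0
      have hr0 : r = 0 := by
        by_contra h0
        have hpos : 0 < s - t := by omega
        have hlt : s - t < m := by omega
        exact Nat.find_min hex hlt ⟨hpos, hrS⟩
      exact ⟨s / m, by omega⟩
    · rintro ⟨k, rfl⟩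
      exact hmul k
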